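/- Let f₁, …, f_k : ℕ → ℝ satisfy a convolution-recursive system σf_i = p_i(f₁,…,f_k) where each p_i is a convolution polynomial with rational coefficients. Then the system of formal power series equations G_i(x) = f_i(0) + x · p̂_i(G₁(x),…,G_k(x)), where p̂_i is p_i with convolution replaced by the product of power series, has a unique solution in formal power series, namely G_i = g_{f_i}, the generating functions of the f_i. -/

import Mathlib

/-- Interpretation of a convolution polynomial with rational coefficients on a
tuple of formal power series: multiplication of power series corresponds to
convolution of sequences and constants `k ∈ ℚ` to the sequence `k,0,0,…`. -/
noncomputable def convPolyEval {k : ℕ} (p : MvPolynomial (Fin k) ℚ)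
    (G : Fin k → PowerSeries ℝ) : PowerSeries ℝ :=
  MvPolynomial.aeval G p

lemma convPolyEval_coeff_congr {k : ℕ} (p : MvPolynomial (Fin k) ℚ)
    (G H : Fin k → PowerSeries ℝ) (n : ℕ)
    (h : ∀ j m, m ≤ n → PowerSeries.coeff m (G j) = PowerSeries.coeff m (H j)) :
    ∀ m ≤ n, PowerSeries.coeff m (convPolyEval p G) = PowerSeries.coeff m (convPolyEval p H) := by
  induction p using MvPolynomial.induction_on with
  | C a => intro m hm; simp [convPolyEval]
  | add q r hq hr =>
      intro m hm
      simp only [convPolyEval, map_add] at *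
      rw [hq m hm, hr m hm]
  | mul_X q j hq =>
      intro m hm
      simp only [convPolyEval, map_mul, MvPolynomial.aeval_X] at *
      rw [PowerSeries.coeff_mul, PowerSeries.coeff_mul]
      apply Finset.sum_congr rfl
      intro ab hab
      rw [Finset.HasAntidiagonal.mem_antidiagonal] at hab
      rw [hq ab.1 (le_trans (by omega) hm), h j ab.2 (le_trans (by omega) hm)]

/-- If the sequences `f₁, …, f_k : ℕ → ℝ` satisfy a convolution-recursive system
`σfᵢ = pᵢ(f₁,…,f_k)` (expressed coefficient-wise: `fᵢ(n+1)` is the `n`-th term of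
the convolution polynomial `pᵢ` applied to the sequences), then the associated
system of power series equations `Gᵢ = fᵢ(0) + X · p̂ᵢ(G₁,…,G_k)` has a unique
formal power series solution, namely the generating functions `g_{fᵢ} = mk (fᵢ)`. -/
theorem genFun_unique_solution {k : ℕ} (f : Fin k → ℕ → ℝ)
    (p : Fin k → MvPolynomial (Fin k) ℚ)
    (hrec : ∀ i n, f i (n + 1) =
      PowerSeries.coeff n (convPolyEval (p i) (fun j => PowerSeries.mk (f j)))) :
    ∀ G : Fin k → PowerSeries ℝ,
      (∀ i, G i = PowerSeries.C (f i 0) + PowerSeries.X * convPolyEval (p i) G)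
        ↔ G = fun i => PowerSeries.mk (f i) := by
  intro G
  constructor
  · intro hG
    have key : ∀ n i, PowerSeries.coeff n (G i) = f i n := by
      intro n
      induction n using Nat.strong_induction_on with
      | _ n ih =>
        intro i
        cases n with
        | zero =>
            rw [hG i]
            simp
        | succ m =>
            rw [hG i]
            simp only [map_add, PowerSeries.coeff_succ_X_mul, PowerSeries.coeff_C,
              Nat.succ_ne_zero, if_false, zero_add]
            rw [convPolyEval_coeff_congr (p i) G (fun j => PowerSeries.mk (f j)) m
              (fun j l hl => by rw [ih l (by omega) j, PowerSeries.coeff_mk]) m le_rfl]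
            exact (hrec i m).symm
    funext i
    ext n
    rw [key n i, PowerSeries.coeff_mk]
  · rintro rfl i
    ext n
    cases n with
    | zero => simp
    | succ m =>
        simp only [map_add, PowerSeries.coeff_succ_X_mul, PowerSeries.coeff_C,
          Nat.succ_ne_zero, if_false, zero_add, PowerSeries.coeff_mk]
        exact hrec i m
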